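/- For a CFG G with regularity width d (treewidth of the reminder graph plus one), every reachable state RS of A(G) has length at most 2d, and the set of variables occurring in RS has size at most d. -/

import Mathlib

/-- The list of variable occurrences (in order) in the right-hand side of a rule. -/
def ruleVars {T N : Type*} (r : ContextFreeRule T N) : List N :=
  r.output.filterMap (fun s => match s with
    | Symbol.nonterminal B => some B
    | _ => none)

/-- The word `w₀w₁⋯w_r` of terminals (in order) in the right-hand side of a rule. -/
def ruleTerms {T N : Type*} (r : ContextFreeRule T N) : List T :=
  r.output.filterMap (fun s => match s with
    | Symbol.terminal a => some a
    | _ => none)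

/-- A reminder pair: a `Current` component in `V ∪ {⊥}` (modelled as `Option`,
with `none` playing the role of `⊥`) and a `Followup` multiset over the variables. -/
abbrev RPair {T : Type*} (g : ContextFreeGrammar T) : Type _ :=
  Option g.NT × Multiset g.NT

/-- A reminder sequence: a finite sequence of reminder pairs. -/
abbrev RSeq {T : Type*} (g : ContextFreeGrammar T) : Type _ := List (RPair g)

/-- The five transition rules of the automaton `A(G)`; a transition reads a word
over the terminals. -/
inductive Step {T : Type*} (g : ContextFreeGrammar T) [DecidableEq g.NT] :
    RSeq g → List T → RSeq g → Prop where
  /-- (1) `RS·(A,∅) ⟹ RS·(A_j, ⟦A₁,…,A_r⟧ ⊖ ⟦A_j⟧)` reading `w₀w₁⋯w_r`,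
  for a production `A → w₀A₁w₁⋯A_r w_r` with `r ≥ 1`. -/
  | ext (RS : RSeq g) (r : ContextFreeRule T g.NT) (hr : r ∈ g.rules)
      (Aj : g.NT) (hAj : Aj ∈ ruleVars r) :
      Step g (RS ++ [(some r.input, 0)]) (ruleTerms r)
        (RS ++ [(some Aj, (ruleVars r : Multiset g.NT).erase Aj)])
  /-- (2) `RS·(A,v) ⟹ RS·(A,v)·(A_j, ⟦A₁,…,A_r⟧ ⊖ ⟦A_j⟧)` when `v ≠ ∅`. -/
  | extNe (RS : RSeq g) (r : ContextFreeRule T g.NT) (hr : r ∈ g.rules)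
      (v : Multiset g.NT) (hv : v ≠ 0) (Aj : g.NT) (hAj : Aj ∈ ruleVars r) :
      Step g (RS ++ [(some r.input, v)]) (ruleTerms r)
        (RS ++ [(some r.input, v), (some Aj, (ruleVars r : Multiset g.NT).erase Aj)])
  /-- (3) `RS·(A,∅) ⟹ RS·(⊥,∅)` reading `w`, for a production `A → w`. -/
  | replE (RS : RSeq g) (r : ContextFreeRule T g.NT) (hr : r ∈ g.rules)
      (hterm : ruleVars r = []) :
      Step g (RS ++ [(some r.input, 0)]) (ruleTerms r) (RS ++ [(none, 0)])
  /-- (4) `RS·(A, v ⊕ ⟦A′⟧) ⟹ RS·(A′, v)` reading `w`, for a production `A → w`. -/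
  | replNe (RS : RSeq g) (r : ContextFreeRule T g.NT) (hr : r ∈ g.rules)
      (hterm : ruleVars r = []) (v : Multiset g.NT) (A' : g.NT) :
      Step g (RS ++ [(some r.input, v + {A'})]) (ruleTerms r) (RS ++ [(some A', v)])
  /-- (5) `RS·(A, v ⊕ ⟦A′⟧)·(⊥,∅) ⟹ RS·(A′, v)` reading `ε`. -/
  | shorten (RS : RSeq g) (A : g.NT) (v : Multiset g.NT) (A' : g.NT) :
      Step g (RS ++ [(some A, v + {A'}), (none, 0)]) [] (RS ++ [(some A', v)])

/-- The state constraint of `A(G)`: every variable occurs at most twice (as a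
`Current` component) in the reminder sequence. -/
def Ok {T : Type*} (g : ContextFreeGrammar T) [DecidableEq g.NT] (RS : RSeq g) : Prop :=
  ∀ A : g.NT, (RS.map Prod.fst).count (some A) ≤ 2

/-- Multi-step runs of `A(G)` through states of the automaton, concatenating the
words read. -/
inductive Steps {T : Type*} (g : ContextFreeGrammar T) [DecidableEq g.NT] :
    RSeq g → List T → RSeq g → Prop where
  | refl (RS : RSeq g) (h : Ok g RS) : Steps g RS [] RS
  | tail {RS₁ RS₂ RS₃ : RSeq g} {w w' : List T} (h : Steps g RS₁ w RS₂)
      (hstep : Step g RS₂ w' RS₃) (h3 : Ok g RS₃) : Steps g RS₁ (w ++ w') RS₃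

/-- The initial state `(S, ∅)` of `A(G)`. -/
def start {T : Type*} (g : ContextFreeGrammar T) : RSeq g := [(some g.initial, 0)]

/-- A reminder sequence is a (reachable) state of `A(G)` if it can be reached from
the initial state `(S, ∅)`. -/
def ReachableState {T : Type*} (g : ContextFreeGrammar T) [DecidableEq g.NT]
    (RS : RSeq g) : Prop :=
  ∃ w : List T, Steps g (start g) w RS

/-- `A(G)` accepts the word `w`: it can go from the initial state `(S,∅)` to the
final state `(⊥,∅)` reading `w`. -/
def AutAccepts {T : Type*} (g : ContextFreeGrammar T) [DecidableEq g.NT]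
    (w : List T) : Prop :=
  Steps g (start g) w [(none, 0)]
/-- The accessibility relation: `A → A′` iff `A′` occurs in the right-hand side of
some production of `A`. -/
def Accessible {T : Type*} (g : ContextFreeGrammar T) (A A' : g.NT) : Prop :=
  ∃ r ∈ g.rules, r.input = A ∧ A' ∈ ruleVars r

/-- The reachability relation `⇒⁺`: transitive closure of accessibility. -/
def Reaches {T : Type*} (g : ContextFreeGrammar T) : g.NT → g.NT → Prop :=
  Relation.TransGen (Accessible g)

/-- One direction of the edge relation of the reminder graph: for every production
with at least two variable occurrences `A₁, …, A_r`, connect `Aᵢ` with `A_j` (for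
distinct variables this is exactly `i ≠ j`), and connect `A′` with `A_j` whenever
`Aᵢ ⇒⁺ A′` and `A′ ≠ A_j`. -/
def RemEdge {T : Type*} (g : ContextFreeGrammar T) (X Y : g.NT) : Prop :=
  (∃ r ∈ g.rules, 2 ≤ (ruleVars r).length ∧ X ∈ ruleVars r ∧ Y ∈ ruleVars r) ∨
  (∃ r ∈ g.rules, 2 ≤ (ruleVars r).length ∧
    ∃ Ai ∈ ruleVars r, Y ∈ ruleVars r ∧ Reaches g Ai X)

/-- The reminder graph `R(G)` of a context-free grammar, as a simple graph on the
variables. -/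
def reminderGraph {T : Type*} (g : ContextFreeGrammar T) : SimpleGraph g.NT where
  Adj X Y := X ≠ Y ∧ (RemEdge g X Y ∨ RemEdge g Y X)
  symm := ⟨fun X Y h => ⟨h.1.symm, h.2.symm⟩⟩
  loopless := ⟨fun X h => h.1 rfl⟩
/-- A tree decomposition of a graph `H`. -/
structure IsTreeDecomposition {V : Type*} {ι : Type*} (H : SimpleGraph V)
    (T : SimpleGraph ι) (B : ι → Set V) : Prop where
  isTree : T.IsTree
  support_connected : ∀ v : V, (T.induce {η | v ∈ B η}).Connected
  edge_mem : ∀ ⦃u v : V⦄, H.Adj u v → ∃ η, u ∈ B η ∧ v ∈ B η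

/-- `H` has a tree decomposition of width at most `k`. -/
def TreewidthLE {V : Type*} (H : SimpleGraph V) (k : ℕ) : Prop :=
  ∃ (ι : Type) (T : SimpleGraph ι) (B : ι → Set V),
    IsTreeDecomposition H T B ∧ ∀ η, (B η).Finite ∧ (B η).ncard ≤ k + 1

/-- The treewidth of `H` (as an extended natural number, `⊤` if no decomposition of
finite width exists). -/
noncomputable def treewidth {V : Type*} (H : SimpleGraph V) : ℕ∞ :=
  sInf ((↑) '' {k : ℕ | TreewidthLE H k})

section TreeAux
open SimpleGraph

variable {ι : Type*} {T : SimpleGraph ι}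

/-- First-hit decomposition of a walk w.r.t. a set containing the endpoint. -/
lemma walk_first_hit (S : Set ι) : ∀ {c a : ι} (w : T.Walk c a), a ∈ S →
    ∃ m, m ∈ S ∧ ∃ (w1 : T.Walk c m) (w2 : T.Walk m a),
      w = w1.append w2 ∧ ∀ x ∈ w1.support, x ∈ S → x = m := by
  intro c a w
  induction w with
  | nil =>
    exact fun ha => ⟨_, ha, .nil, .nil, rfl, by intro x hx _; simpa using hx⟩
  | @cons u v b h w ih =>
    intro ha
    by_cases hu : u ∈ S
    · exact ⟨u, hu, .nil, .cons h w, rfl, by intro x hx _; simpa using hx⟩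
    · obtain ⟨m, hm, w1, w2, hw, hmin⟩ := ih ha
      refine ⟨m, hm, .cons h w1, w2, by rw [Walk.cons_append, hw], ?_⟩
      intro x hx hxS
      rcases List.mem_cons.mp (by simpa using hx) with rfl | hx'
      · exact absurd hxS hu
      · exact hmin x hx' hxS

/-- In a tree, any path between two points of a connected (induced) set stays in the set. -/
lemma path_support_subset [DecidableEq ι] (hT : T.IsTree) {A : Set ι}
    (hA : (T.induce A).Connected) {a b : ι} (ha : a ∈ A) (hb : b ∈ A)
    (p : T.Walk a b) (hp : p.IsPath) : ∀ x ∈ p.support, x ∈ A := by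
  obtain ⟨w⟩ := hA ⟨a, ha⟩ ⟨b, hb⟩
  have hw : ∃ w' : T.Walk a b, ∀ x ∈ w'.support, x ∈ A := by
    refine ⟨w.map (SimpleGraph.Embedding.induce A).toHom, ?_⟩
    intro x hx
    replace hx : x ∈ (w.map (SimpleGraph.Embedding.induce A).toHom).support := hx
    rw [Walk.support_map] at hx
    obtain ⟨y, _, rfl⟩ := List.mem_map.mp hx
    exact y.2
  obtain ⟨w', hw'⟩ := hw
  have hb' : w'.bypass.IsPath := Walk.bypass_isPath w'
  have : p = w'.bypass :=
    ((hT.existsUnique_path a b).unique hp hb')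
  rw [this]
  exact fun x hx => hw' x (Walk.support_bypass_subset w' hx)

/-- Median: three paths pairwise joining `a`, `b`, `c` in a tree share a vertex. -/
lemma tree_median [DecidableEq ι] (hT : T.IsTree) {a b c : ι}
    (p : T.Walk a b) (hp : p.IsPath) (q : T.Walk a c) (hq : q.IsPath)
    (r : T.Walk c b) (hr : r.IsPath) :
    ∃ m, m ∈ p.support ∧ m ∈ q.support ∧ m ∈ r.support := by
  obtain ⟨m, hm, w1, w2, hdec, hmin⟩ :=
    walk_first_hit {x | x ∈ p.support} q.reverse (by simp)
  have hmp : m ∈ p.support := hm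
  have hmq : m ∈ q.support := by
    have : m ∈ q.reverse.support := by
      rw [hdec]
      simp [Walk.mem_support_append_iff]
    simpa using this
  have hw1 : w1.IsPath := by
    have : q.reverse.IsPath := hq.reverse
    rw [hdec] at this
    exact Walk.IsPath.of_append_left this
  have hdropP : (p.dropUntil m hmp).IsPath := hp.dropUntil hmp
  -- The concatenated walk c → m → b is a path.
  have hW : (w1.append (p.dropUntil m hmp)).IsPath := by
    rw [Walk.isPath_def, Walk.support_append, List.nodup_append]
    refine ⟨hw1.support_nodup, ?_, ?_⟩
    · rw [Walk.isPath_def] at hdropP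
      exact hdropP.tail
    · intro x hx y hx' hxy
      subst hxy
      have hxP : x ∈ p.support :=
        Walk.support_dropUntil_subset p hmp (List.mem_of_mem_tail hx')
      have hxm : x = m := hmin x hx hxP
      rw [hxm] at hx'
      have : (p.dropUntil m hmp).support = m :: (p.dropUntil m hmp).support.tail :=
        Walk.support_eq_cons _
      rw [Walk.isPath_def, this] at hdropP
      exact (List.nodup_cons.mp hdropP).1 hx'
  have hreq : r = w1.append (p.dropUntil m hmp) :=
    (hT.existsUnique_path c b).unique hr hW
  refine ⟨m, hmp, hmq, ?_⟩
  rw [hreq]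
  simp [Walk.mem_support_append_iff]

lemma reachable_of_support_subset {S : Set ι} :
    ∀ {a b : ι} (w : T.Walk a b) (hw : ∀ x ∈ w.support, x ∈ S),
    (T.induce S).Reachable ⟨a, hw a w.start_mem_support⟩ ⟨b, hw b w.end_mem_support⟩ := by
  intro a b w
  induction w with
  | nil => exact fun _ => Reachable.refl _
  | @cons u v b h w ih =>
    intro hw
    have hu : u ∈ S := hw u (by simp)
    have hv : v ∈ S := hw v (by simp)
    have hadj : (T.induce S).Adj ⟨u, hu⟩ ⟨v, hv⟩ := h
    have hrest : ∀ x ∈ w.support, x ∈ S := fun x hx => hw x (by simp [hx])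
    exact (hadj.reachable).trans (ih hrest)

/-- Intersection of two connected (induced) subsets of a tree is connected. -/
lemma inter_connected [DecidableEq ι] (hT : T.IsTree) {A B : Set ι}
    (hA : (T.induce A).Connected) (hB : (T.induce B).Connected)
    (hne : (A ∩ B).Nonempty) : (T.induce (A ∩ B)).Connected := by
  rw [SimpleGraph.connected_iff]
  refine ⟨?_, by exact ⟨⟨hne.choose, hne.choose_spec⟩⟩⟩
  rintro ⟨x, hxA, hxB⟩ ⟨y, hyA, hyB⟩
  obtain ⟨p, hp⟩ := (hT.existsUnique_path x y)
  have hsubA := path_support_subset hT hA hxA hyA p hp.1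
  have hsubB := path_support_subset hT hB hxB hyB p hp.1
  have hsub : ∀ z ∈ p.support, z ∈ A ∩ B := fun z hz => ⟨hsubA z hz, hsubB z hz⟩
  exact reachable_of_support_subset p hsub

/-- Helly property (three sets) for connected subsets of a tree. -/
lemma helly_three [DecidableEq ι] (hT : T.IsTree) {A B C : Set ι}
    (hA : (T.induce A).Connected) (hB : (T.induce B).Connected)
    (hC : (T.induce C).Connected)
    (hAB : (A ∩ B).Nonempty) (hAC : (A ∩ C).Nonempty) (hBC : (B ∩ C).Nonempty) :
    (A ∩ B ∩ C).Nonempty := by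
  obtain ⟨c, hcA, hcB⟩ := hAB
  obtain ⟨b, hbA, hbC⟩ := hAC
  obtain ⟨a, haB, haC⟩ := hBC
  -- p : a-b in B? choose paths: p : b-c (both in A), q : b-a? use tree_median on a,b,c
  -- median of paths p : a→b, q : a→c, r : c→b
  obtain ⟨p, hp⟩ := hT.existsUnique_path a b
  obtain ⟨q, hq⟩ := hT.existsUnique_path a c
  obtain ⟨r, hr⟩ := hT.existsUnique_path c b
  obtain ⟨m, hmp, hmq, hmr⟩ := tree_median hT p hp.1 q hq.1 r hr.1
  -- a ∈ B∩C, b ∈ A∩C, c ∈ A∩B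
  have hmA : m ∈ A := path_support_subset hT hA hbA hcA
    (by exact r.reverse) (by exact hr.1.reverse) m (by simpa using hmr)
  have hmB : m ∈ B := path_support_subset hT hB haB hcB q hq.1 m hmq
  have hmC : m ∈ C := path_support_subset hT hC haC hbC p hp.1 m hmp
  exact ⟨m, ⟨hmA, hmB⟩, hmC⟩

/-- Helly property for finitely many connected subsets of a tree. -/
lemma helly_list [DecidableEq ι] (hT : T.IsTree) :
    ∀ (n : ℕ) (sets : List (Set ι)), sets.length = n → sets ≠ [] →
    (∀ A ∈ sets, (T.induce A).Connected) →
    (∀ A ∈ sets, ∀ B ∈ sets, (A ∩ B).Nonempty) →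
    ∃ η, ∀ A ∈ sets, η ∈ A := by
  intro n
  induction n with
  | zero => intro sets hlen hne _ _; exact absurd (List.length_eq_zero_iff.mp hlen) hne
  | succ n ih =>
    rintro (_ | ⟨A, rest⟩) hlen hne hconn hpair
    · exact absurd rfl hne
    match rest with
    | [] =>
      obtain ⟨η, hη, _⟩ := hpair A (by simp) A (by simp)
      exact ⟨η, by simpa using hη⟩
    | B :: rest' =>
      have hA : (T.induce A).Connected := hconn A (by simp)
      have hB : (T.induce B).Connected := hconn B (by simp)
      have hABne : (A ∩ B).Nonempty := hpair A (by simp) B (by simp)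
      have hABconn : (T.induce (A ∩ B)).Connected := inter_connected hT hA hB hABne
      have hmem : ∀ C ∈ rest', C ∈ A :: B :: rest' := by
        intro C hC; simp [hC]
      obtain ⟨η, hη⟩ := ih ((A ∩ B) :: rest') (by simpa using hlen) (by simp)
        (by
          intro C hC
          rcases List.mem_cons.mp hC with rfl | hC
          · exact hABconn
          · exact hconn C (hmem C hC))
        (by
          intro C hC D hD
          rcases List.mem_cons.mp hC with rfl | hC <;> rcases List.mem_cons.mp hD with rfl | hD
          · simpa [Set.inter_assoc] using hABne
          · -- (A∩B) ∩ D
            exact helly_three hT hA hB (hconn D (hmem D hD)) hABne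
              (hpair A (by simp) D (hmem D hD)) (hpair B (by simp) D (hmem D hD))
          · rw [Set.inter_comm]
            exact helly_three hT hA hB (hconn C (hmem C hC)) hABne
              (hpair A (by simp) C (hmem C hC)) (hpair B (by simp) C (hmem C hC))
          · exact hpair C (hmem C hC) D (hmem D hD))
      refine ⟨η, ?_⟩
      have h1 := hη (A ∩ B) (by simp)
      intro C hC
      rcases List.mem_cons.mp hC with rfl | hC
      · exact h1.1
      rcases List.mem_cons.mp hC with rfl | hC
      · exact h1.2
      · exact hη C (by simp [hC])


lemma clique_subset_bag {V : Type*} {H : SimpleGraph V} {T : SimpleGraph ι}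
    {B : ι → Set V} (htd : IsTreeDecomposition H T B) {S : Set V} (hfin : S.Finite)
    (hcl : ∀ x ∈ S, ∀ y ∈ S, x ≠ y → H.Adj x y) : ∃ η, ∀ v ∈ S, v ∈ B η := by
  classical
  rcases S.eq_empty_or_nonempty with rfl | hSne
  · obtain ⟨η⟩ := htd.isTree.isConnected.nonempty
    exact ⟨η, by simp⟩
  · set L := hfin.toFinset.toList with hL
    have hLmem : ∀ v, v ∈ L ↔ v ∈ S := by
      intro v; rw [hL, Finset.mem_toList, Set.Finite.mem_toFinset]
    have hLne : L ≠ [] := by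
      rw [← List.length_pos_iff, hL, Finset.length_toList, Finset.card_pos]
      exact ⟨hSne.choose, (Set.Finite.mem_toFinset hfin).mpr hSne.choose_spec⟩
    obtain ⟨η, hη⟩ := helly_list htd.isTree (L.map (fun v => {η | v ∈ B η})).length
      (L.map (fun v => {η | v ∈ B η})) rfl (by simpa using hLne)
      (by
        intro A hA
        obtain ⟨v, _, rfl⟩ := List.mem_map.mp hA
        exact htd.support_connected v)
      (by
        intro A hA A' hA'
        obtain ⟨v, hv, rfl⟩ := List.mem_map.mp hA
        obtain ⟨w, hw, rfl⟩ := List.mem_map.mp hA'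
        by_cases hvw : v = w
        · subst hvw
          rw [Set.inter_self]
          have : Nonempty {η | v ∈ B η} := (htd.support_connected v).nonempty
          exact Set.nonempty_coe_sort.mp this
        · obtain ⟨η, h1, h2⟩ := htd.edge_mem
            (hcl v ((hLmem v).mp hv) w ((hLmem w).mp hw) hvw)
          exact ⟨η, h1, h2⟩)
    refine ⟨η, fun v hv => ?_⟩
    exact hη {η | v ∈ B η} (List.mem_map.mpr ⟨v, (hLmem v).mpr hv, rfl⟩)


lemma exists_decomp {V : Type*} {H : SimpleGraph V} {d : ℕ}
    (hd : treewidth H + 1 = (d : ℕ∞)) :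
    ∃ (ι : Type) (T : SimpleGraph ι) (B : ι → Set V),
      IsTreeDecomposition H T B ∧ ∀ η, (B η).Finite ∧ (B η).ncard ≤ d := by
  have hne : {k : ℕ | TreewidthLE H k}.Nonempty := by
    by_contra h
    rw [Set.not_nonempty_iff_eq_empty] at h
    rw [treewidth, h] at hd
    simp at hd
  set A := {k : ℕ | TreewidthLE H k}
  have hmem : sInf A ∈ A := Nat.sInf_mem hne
  have htw : treewidth H = ((sInf A : ℕ) : ℕ∞) := by
    apply le_antisymm
    · exact sInf_le (Set.mem_image_of_mem _ hmem)
    · apply le_sInf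
      rintro x ⟨k, hk, rfl⟩
      exact_mod_cast Nat.sInf_le hk
  rw [htw] at hd
  have hd' : sInf A + 1 = d := by exact_mod_cast hd
  obtain ⟨ι, T, B, htd, hB⟩ := hmem
  exact ⟨ι, T, B, htd, fun η => ⟨(hB η).1, hd' ▸ (hB η).2⟩⟩

end TreeAux

/-- The set of variables occurring in a reminder sequence. -/
def stateVars {T : Type*} (g : ContextFreeGrammar T) (RS : RSeq g) : Set g.NT :=
  {A | ∃ p ∈ RS, p.1 = some A ∨ A ∈ p.2}

section Grammar

variable {T : Type*} {g : ContextFreeGrammar T}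

/-- `X` occurs in a rule with at least two variable occurrences. -/
def Big (g : ContextFreeGrammar T) (X : g.NT) : Prop :=
  ∃ r ∈ g.rules, 2 ≤ (ruleVars r).length ∧ X ∈ ruleVars r

/-- `X` occurs in a big rule one of whose variables reaches `Z` (reflexively). -/
def Anc (g : ContextFreeGrammar T) (X Z : g.NT) : Prop :=
  ∃ r ∈ g.rules, 2 ≤ (ruleVars r).length ∧ X ∈ ruleVars r ∧
    ∃ Ai ∈ ruleVars r, Relation.ReflTransGen (Accessible g) Ai Z

lemma Big.anc {X : g.NT} (h : Big g X) : Anc g X X := by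
  obtain ⟨r, hr, hlen, hX⟩ := h
  exact ⟨r, hr, hlen, hX, X, hX, Relation.ReflTransGen.refl⟩

lemma Anc.step {X Z Y : g.NT} (h : Anc g X Z) (hZY : Accessible g Z Y) : Anc g X Y := by
  obtain ⟨r, hr, hlen, hX, Ai, hAi, hreach⟩ := h
  exact ⟨r, hr, hlen, hX, Ai, hAi, hreach.tail hZY⟩

lemma accessible_of_mem {r : ContextFreeRule T g.NT} (hr : r ∈ g.rules)
    {Y : g.NT} (hY : Y ∈ ruleVars r) : Accessible g r.input Y :=
  ⟨r, hr, rfl, hY⟩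

lemma Anc.adj {X Z Y : g.NT} (h : Anc g X Z)
    (hZY : Relation.ReflTransGen (Accessible g) Z Y) (hne : X ≠ Y) :
    (reminderGraph g).Adj X Y := by
  obtain ⟨r, hr, hlen, hX, Ai, hAi, hreach⟩ := h
  have hAiY : Relation.ReflTransGen (Accessible g) Ai Y := hreach.trans hZY
  rcases Relation.reflTransGen_iff_eq_or_transGen.mp hAiY with rfl | htrans
  · exact (⟨hne, Or.inl (Or.inl ⟨r, hr, hlen, hX, hAi⟩)⟩ : X ≠ Y ∧ (RemEdge g X Y ∨ RemEdge g Y X))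
  · exact (⟨hne, Or.inr (Or.inr ⟨r, hr, hlen, Ai, hAi, hX, htrans⟩)⟩ : X ≠ Y ∧ (RemEdge g X Y ∨ RemEdge g Y X))

lemma two_le_of_two_mem {r : ContextFreeRule T g.NT} {X Y : g.NT}
    (hX : X ∈ ruleVars r) (hY : Y ∈ ruleVars r) (hne : X ≠ Y) :
    2 ≤ (ruleVars r).length := by
  classical
  have hsub : ({X, Y} : Finset g.NT) ⊆ (ruleVars r).toFinset := by
    intro z hz
    rcases Finset.mem_insert.mp hz with rfl | hz
    · exact List.mem_toFinset.mpr hX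
    · exact List.mem_toFinset.mpr (Finset.mem_singleton.mp hz ▸ hY)
  calc 2 = ({X, Y} : Finset g.NT).card := by rw [Finset.card_insert_of_notMem (by simpa using hne), Finset.card_singleton]
    _ ≤ (ruleVars r).toFinset.card := Finset.card_le_card hsub
    _ ≤ (ruleVars r).length := (ruleVars r).toFinset_card_le

lemma mem_stateVars_append {L1 L2 : RSeq g} {X : g.NT} :
    X ∈ stateVars g (L1 ++ L2) ↔ X ∈ stateVars g L1 ∨ X ∈ stateVars g L2 := by
  simp only [stateVars, Set.mem_setOf_eq, List.mem_append]
  constructor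
  · rintro ⟨p, hp | hp, h⟩
    · exact Or.inl ⟨p, hp, h⟩
    · exact Or.inr ⟨p, hp, h⟩
  · rintro (⟨p, hp, h⟩ | ⟨p, hp, h⟩)
    · exact ⟨p, Or.inl hp, h⟩
    · exact ⟨p, Or.inr hp, h⟩

lemma mem_stateVars_singleton {c : Option g.NT} {v : Multiset g.NT} {X : g.NT} :
    X ∈ stateVars g [(c, v)] ↔ c = some X ∨ X ∈ v := by
  simp [stateVars]

lemma stateVars_finite (RS : RSeq g) : (stateVars g RS).Finite := by
  classical
  induction RS with
  | nil => simp [stateVars, Set.finite_empty]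
  | cons p L ih =>
    have : stateVars g (p :: L) ⊆
        ({A | p.1 = some A} ∪ (↑p.2.toFinset : Set g.NT)) ∪ stateVars g L := by
      rintro X ⟨q, hq, hX⟩
      rcases List.mem_cons.mp hq with rfl | hq
      · rcases hX with h | h
        · exact Or.inl (Or.inl h)
        · exact Or.inl (Or.inr (by simpa using h))
      · exact Or.inr ⟨q, hq, hX⟩
    refine Set.Finite.subset (Set.Finite.union (Set.Finite.union ?_ (p.2.toFinset.finite_toSet)) ih) this
    rcases hc : p.1 with _ | A
    · simp [hc, Set.finite_empty]
    · exact Set.Finite.subset (Set.finite_singleton A) (by intro x hx; simp_all)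

end Grammar

section Lists

variable {α : Type*}

lemma split_concat_cases {L P : List α} {y x : α} {Q : List α}
    (h : P ++ y :: Q = L ++ [x]) :
    (P = L ∧ y = x ∧ Q = []) ∨ ∃ Q₀, Q = Q₀ ++ [x] ∧ L = P ++ y :: Q₀ := by
  rcases Q.eq_nil_or_concat with rfl | ⟨Q₀, x', rfl⟩
  · obtain ⟨h1, h2⟩ := List.append_inj' h (by simp)
    exact Or.inl ⟨h1, by simpa using h2, rfl⟩
  · rw [List.concat_eq_append, show y :: (Q₀ ++ [x']) = (y :: Q₀) ++ [x'] from rfl,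
      ← List.append_assoc] at h
    obtain ⟨h1, h2⟩ := List.append_inj' h (by simp)
    have hx : x' = x := by simpa using h2
    exact Or.inr ⟨Q₀, by rw [List.concat_eq_append, hx], h1.symm⟩

lemma split_concat2_cases {L P : List α} {y x₁ x₂ : α} {Q : List α}
    (h : P ++ y :: Q = L ++ [x₁, x₂]) :
    (P = L ∧ y = x₁ ∧ Q = [x₂]) ∨ (P = L ++ [x₁] ∧ y = x₂ ∧ Q = []) ∨
      ∃ Q₀, Q = Q₀ ++ [x₁, x₂] ∧ L = P ++ y :: Q₀ := by
  have h' : P ++ y :: Q = (L ++ [x₁]) ++ [x₂] := by rw [h]; simp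
  rcases split_concat_cases h' with ⟨h1, h2, h3⟩ | ⟨Q₀, hQ, hL⟩
  · exact Or.inr (Or.inl ⟨h1, h2, h3⟩)
  · rcases split_concat_cases hL.symm with ⟨h1, h2, h3⟩ | ⟨Q₁, hQ₁, hL₁⟩
    · refine Or.inl ⟨h1, h2, ?_⟩
      rw [hQ, h3]; rfl
    · refine Or.inr (Or.inr ⟨Q₁, ?_, hL₁⟩)
      rw [hQ, hQ₁]; simp

lemma concat_inj {L P : List α} {y x : α} (h : P ++ [y] = L ++ [x]) :
    P = L ∧ y = x := by
  obtain ⟨h1, h2⟩ := List.append_inj' h (by simp)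
  exact ⟨h1, by simpa using h2⟩

end Lists

section Auto

variable {T : Type*} {g : ContextFreeGrammar T} [DecidableEq g.NT]

lemma mem_ruleVars_of_mem_erase {r : ContextFreeRule T g.NT} {Aj X : g.NT}
    (h : X ∈ (ruleVars r : Multiset g.NT).erase Aj) : X ∈ ruleVars r :=
  Multiset.mem_coe.mp (Multiset.mem_of_mem_erase h)

lemma big_of_mem_erase {r : ContextFreeRule T g.NT} {Aj B : g.NT}
    (hAj : Aj ∈ ruleVars r) (hB : B ∈ (ruleVars r : Multiset g.NT).erase Aj) :
    2 ≤ (ruleVars r).length := by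
  have h1 : Multiset.card ((ruleVars r : Multiset g.NT).erase Aj)
      = Multiset.card (ruleVars r : Multiset g.NT) - 1 := by
    rw [Multiset.card_erase_of_mem (Multiset.mem_coe.mpr hAj)]
    rfl
  have h2 : 0 < Multiset.card ((ruleVars r : Multiset g.NT).erase Aj) :=
    Multiset.card_pos_iff_exists_mem.mpr ⟨B, hB⟩
  have h3 : Multiset.card (ruleVars r : Multiset g.NT) = (ruleVars r).length :=
    Multiset.coe_card _
  omega

lemma erase_add_singleton (v : Multiset g.NT) (A' : g.NT) :
    (v + {A'}).erase A' = v := by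
  rw [add_comm, Multiset.singleton_add, Multiset.erase_cons_head]

/-- The inductive invariant of reachable states. -/
structure AutInv (g : ContextFreeGrammar T) [DecidableEq g.NT] (RS : RSeq g) : Prop where
  clique : ∀ X ∈ stateVars g RS, ∀ Y ∈ stateVars g RS, X ≠ Y → (reminderGraph g).Adj X Y
  big : ∀ p ∈ RS, p.2 ≠ 0 → (∀ A, p.1 = some A → Big g A) ∧ (∀ X ∈ p.2, Big g X)
  anc_f : ∀ (P Q : RSeq g) (c : Option g.NT) (v : Multiset g.NT),
      RS = P ++ (c, v) :: Q → ∀ B ∈ v, ∀ X, (X ∈ stateVars g P ∨ X ∈ v.erase B) →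
      Anc g X B
  anc_c : ∀ (P : RSeq g) (A : g.NT) (v : Multiset g.NT),
      RS = P ++ [(some A, v)] → ∀ X, (X ∈ stateVars g P ∨ X ∈ v) → Anc g X A
  lastNone : ∀ (P Q : RSeq g) (v : Multiset g.NT), RS = P ++ (none, v) :: Q → Q = []

lemma AutInv.noNoneP {RS P t : RSeq g} (h : AutInv g RS) (ht : RS = P ++ t) (htne : t ≠ [])
    {p : RPair g} (hp : p ∈ P) : p.1 ≠ none := by
  obtain ⟨P₁, P₂, rfl⟩ := List.append_of_mem hp
  intro hnone
  obtain ⟨c, v⟩ := p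
  simp only at hnone
  subst hnone
  have := h.lastNone P₁ (P₂ ++ t) v (by rw [ht]; simp)
  exact htne (by simpa using (List.append_eq_nil_iff.mp this).2)

lemma mem_stateVars_concat {P : RSeq g} {c : Option g.NT} {v : Multiset g.NT} {X : g.NT} :
    X ∈ stateVars g (P ++ [(c, v)]) ↔ X ∈ stateVars g P ∨ c = some X ∨ X ∈ v := by
  rw [mem_stateVars_append, mem_stateVars_singleton]

lemma step_preserves_inv {RS₁ RS₂ : RSeq g} {w : List T}
    (hstep : Step g RS₁ w RS₂) (hInv : AutInv g RS₁) : AutInv g RS₂ := by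
  cases hstep with
  | ext P r hr Aj hAj =>
    set m : Multiset g.NT := (ruleVars r : Multiset g.NT).erase Aj with hm
    have hancP : ∀ X ∈ stateVars g P, Anc g X r.input :=
      fun X hX => hInv.anc_c P r.input 0 rfl X (Or.inl hX)
    have hacc : ∀ Y ∈ ruleVars r, Accessible g r.input Y :=
      fun Y hY => accessible_of_mem hr hY
    have hmemv : ∀ X, X ∈ stateVars g (P ++ [(some Aj, m)]) ↔
        X ∈ stateVars g P ∨ X = Aj ∨ X ∈ m := by
      intro X
      rw [mem_stateVars_concat]
      simp [eq_comm]
    have hnewr : ∀ X, (X = Aj ∨ X ∈ m) → X ∈ ruleVars r := by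
      rintro X (rfl | hX)
      · exact hAj
      · exact mem_ruleVars_of_mem_erase hX
    refine ⟨?_, ?_, ?_, ?_, ?_⟩
    · -- clique
      intro X hX Y hY hne
      rcases (hmemv X).mp hX with hX | hX <;> rcases (hmemv Y).mp hY with hY | hY
      · exact hInv.clique X (mem_stateVars_append.mpr (Or.inl hX)) Y
          (mem_stateVars_append.mpr (Or.inl hY)) hne
      · exact (hancP X hX).adj (Relation.ReflTransGen.single (hacc Y (hnewr Y hY))) hne
      · exact ((hancP Y hY).adj (Relation.ReflTransGen.single (hacc X (hnewr X hX))) hne.symm).symm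
      · exact (⟨hne, Or.inl (Or.inl ⟨r, hr, two_le_of_two_mem (hnewr X hX) (hnewr Y hY) hne,
          hnewr X hX, hnewr Y hY⟩)⟩ : X ≠ Y ∧ (RemEdge g X Y ∨ RemEdge g Y X))
    · -- big
      intro p hp hv
      rcases List.mem_append.mp hp with hp | hp
      · exact hInv.big p (List.mem_append.mpr (Or.inl hp)) hv
      · have hpeq : p = (some Aj, m) := List.mem_singleton.mp hp
        rw [hpeq] at hv ⊢
        simp only at hv
        obtain ⟨B, hB⟩ := Multiset.exists_mem_of_ne_zero hv
        have h2 := big_of_mem_erase hAj hB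
        refine ⟨?_, ?_⟩
        · rintro A hA
          simp only [Option.some.injEq] at hA
          exact ⟨r, hr, h2, hA ▸ hAj⟩
        · exact fun X hX => ⟨r, hr, h2, mem_ruleVars_of_mem_erase hX⟩
    · -- anc_f
      intro P' Q' c v heq B hB X hX
      rcases split_concat_cases heq.symm with ⟨hP, hpair, hQ⟩ | ⟨Q₀, hQ, hP⟩
      · have hv : v = m := congrArg Prod.snd hpair
        rw [hv] at hB hX
        rw [hP] at hX
        have hBr : B ∈ ruleVars r := mem_ruleVars_of_mem_erase hB
        rcases hX with hX | hX
        · exact (hancP X hX).step (hacc B hBr)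
        · exact ⟨r, hr, big_of_mem_erase hAj hB,
            mem_ruleVars_of_mem_erase (Multiset.mem_of_mem_erase hX), B, hBr,
            Relation.ReflTransGen.refl⟩
      · exact hInv.anc_f P' (Q₀ ++ [(some r.input, 0)]) c v
          (by rw [hP]; simp) B hB X hX
    · -- anc_c
      intro P' A' v heq X hX
      obtain ⟨hP, hpair⟩ := concat_inj heq.symm
      have hA' : A' = Aj := by
        have := congrArg Prod.fst hpair
        simpa using this
      have hv : v = m := congrArg Prod.snd hpair
      rw [hv] at hX
      rw [hP] at hX
      rw [hA']
      rcases hX with hX | hX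
      · exact (hancP X hX).step (hacc Aj hAj)
      · exact ⟨r, hr, big_of_mem_erase hAj hX,
          mem_ruleVars_of_mem_erase hX, Aj, hAj, Relation.ReflTransGen.refl⟩
    · -- lastNone
      intro P' Q' v heq
      rcases split_concat_cases heq.symm with ⟨hP, hpair, hQ⟩ | ⟨Q₀, hQ, hP⟩
      · exact hQ
      · have := hInv.lastNone P' (Q₀ ++ [(some r.input, 0)]) v (by rw [hP]; simp)
        simp at this
  | extNe P r hr v hv Aj hAj =>
    set m : Multiset g.NT := (ruleVars r : Multiset g.NT).erase Aj with hm
    have hBigA : Big g r.input :=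
      (hInv.big (some r.input, v) (by simp) hv).1 r.input rfl
    have hancP : ∀ X, (X ∈ stateVars g P ∨ X ∈ v) → Anc g X r.input :=
      hInv.anc_c P r.input v rfl
    have hacc : ∀ Y ∈ ruleVars r, Accessible g r.input Y :=
      fun Y hY => accessible_of_mem hr hY
    have hancOld : ∀ X ∈ stateVars g (P ++ [(some r.input, v)]), Anc g X r.input := by
      intro X hX
      rcases mem_stateVars_concat.mp hX with hX | hX | hX
      · exact hancP X (Or.inl hX)
      · simp only [Option.some.injEq] at hX
        exact hX ▸ hBigA.anc
      · exact hancP X (Or.inr hX)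
    have hnewr : ∀ X, (X = Aj ∨ X ∈ m) → X ∈ ruleVars r := by
      rintro X (rfl | hX)
      · exact hAj
      · exact mem_ruleVars_of_mem_erase hX
    have hmemv : ∀ X, X ∈ stateVars g (P ++ [(some r.input, v), (some Aj, m)]) ↔
        X ∈ stateVars g (P ++ [(some r.input, v)]) ∨ (X = Aj ∨ X ∈ m) := by
      intro X
      have h2 : P ++ [(some r.input, v), (some Aj, m)]
          = (P ++ [(some r.input, v)]) ++ [(some Aj, m)] := by simp
      rw [h2, mem_stateVars_concat]
      simp [eq_comm]
    refine ⟨?_, ?_, ?_, ?_, ?_⟩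
    · -- clique
      intro X hX Y hY hne
      rcases (hmemv X).mp hX with hX | hX <;> rcases (hmemv Y).mp hY with hY | hY
      · exact hInv.clique X hX Y hY hne
      · exact (hancOld X hX).adj (Relation.ReflTransGen.single (hacc Y (hnewr Y hY))) hne
      · exact ((hancOld Y hY).adj (Relation.ReflTransGen.single (hacc X (hnewr X hX))) hne.symm).symm
      · exact (⟨hne, Or.inl (Or.inl ⟨r, hr, two_le_of_two_mem (hnewr X hX) (hnewr Y hY) hne,
          hnewr X hX, hnewr Y hY⟩)⟩ : X ≠ Y ∧ (RemEdge g X Y ∨ RemEdge g Y X))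
    · -- big
      intro p hp hpv
      rcases List.mem_append.mp hp with hp | hp
      · exact hInv.big p (List.mem_append.mpr (Or.inl hp)) hpv
      · rcases List.mem_cons.mp hp with hpeq | hp
        · rw [hpeq] at hpv ⊢
          exact hInv.big (some r.input, v) (by simp) hpv
        · have hpeq : p = (some Aj, m) := List.mem_singleton.mp hp
          rw [hpeq] at hpv ⊢
          simp only at hpv
          obtain ⟨B, hB⟩ := Multiset.exists_mem_of_ne_zero hpv
          have h2 := big_of_mem_erase hAj hB
          refine ⟨?_, ?_⟩
          · rintro A hA
            simp only [Option.some.injEq] at hA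
            exact ⟨r, hr, h2, hA ▸ hAj⟩
          · exact fun X hX => ⟨r, hr, h2, mem_ruleVars_of_mem_erase hX⟩
    · -- anc_f
      intro P' Q' c v' heq B hB X hX
      rcases split_concat2_cases heq.symm with ⟨hP, hpair, hQ⟩ | ⟨hP, hpair, hQ⟩ |
        ⟨Q₀, hQ, hP⟩
      · exact hInv.anc_f P' [] c v' (by rw [hP, hpair]) B hB X hX
      · have hv' : v' = m := congrArg Prod.snd hpair
        rw [hv'] at hB hX
        rw [hP] at hX
        have hBr : B ∈ ruleVars r := mem_ruleVars_of_mem_erase hB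
        rcases hX with hX | hX
        · exact (hancOld X hX).step (hacc B hBr)
        · exact ⟨r, hr, big_of_mem_erase hAj hB,
            mem_ruleVars_of_mem_erase (Multiset.mem_of_mem_erase hX), B, hBr,
            Relation.ReflTransGen.refl⟩
      · exact hInv.anc_f P' (Q₀ ++ [(some r.input, v)]) c v'
          (by rw [hP]; simp) B hB X hX
    · -- anc_c
      intro P' A' v' heq X hX
      have heq2 : (P ++ [(some r.input, v)]) ++ [(some Aj, m)] = P' ++ [(some A', v')] := by
        rw [← heq]; simp
      obtain ⟨hP, hpair⟩ := concat_inj heq2.symm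
      have hA' : A' = Aj := by
        have := congrArg Prod.fst hpair
        simpa using this
      have hv' : v' = m := congrArg Prod.snd hpair
      rw [hv'] at hX
      rw [hP] at hX
      rw [hA']
      rcases hX with hX | hX
      · exact (hancOld X hX).step (hacc Aj hAj)
      · exact ⟨r, hr, big_of_mem_erase hAj hX,
          mem_ruleVars_of_mem_erase hX, Aj, hAj, Relation.ReflTransGen.refl⟩
    · -- lastNone
      intro P' Q' v' heq
      rcases split_concat2_cases heq.symm with ⟨hP, hpair, hQ⟩ | ⟨hP, hpair, hQ⟩ |
        ⟨Q₀, hQ, hP⟩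
      · exact absurd (congrArg Prod.fst hpair) (by simp)
      · exact absurd (congrArg Prod.fst hpair) (by simp)
      · have := hInv.lastNone P' (Q₀ ++ [(some r.input, v)]) v' (by rw [hP]; simp)
        simp at this
  | replE P r hr hterm =>
    have hsub : ∀ X, X ∈ stateVars g (P ++ [((none : Option g.NT), (0 : Multiset g.NT))]) →
        X ∈ stateVars g P := by
      intro X hX
      rcases mem_stateVars_concat.mp hX with hX | hX | hX
      · exact hX
      · exact absurd hX (by simp)
      · exact absurd hX (Multiset.notMem_zero X)
    refine ⟨?_, ?_, ?_, ?_, ?_⟩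
    · intro X hX Y hY hne
      exact hInv.clique X (mem_stateVars_append.mpr (Or.inl (hsub X hX)))
        Y (mem_stateVars_append.mpr (Or.inl (hsub Y hY))) hne
    · intro p hp hpv
      rcases List.mem_append.mp hp with hp | hp
      · exact hInv.big p (List.mem_append.mpr (Or.inl hp)) hpv
      · have hpeq : p = (none, 0) := List.mem_singleton.mp hp
        rw [hpeq] at hpv
        simp at hpv
    · intro P' Q' c v heq B hB X hX
      rcases split_concat_cases heq.symm with ⟨hP, hpair, hQ⟩ | ⟨Q₀, hQ, hP⟩
      · have hv : v = 0 := congrArg Prod.snd hpair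
        rw [hv] at hB
        exact absurd hB (Multiset.notMem_zero B)
      · exact hInv.anc_f P' (Q₀ ++ [(some r.input, 0)]) c v
          (by rw [hP]; simp) B hB X hX
    · intro P' A' v heq X hX
      obtain ⟨hP, hpair⟩ := concat_inj heq.symm
      exact absurd (congrArg Prod.fst hpair) (by simp)
    · intro P' Q' v heq
      rcases split_concat_cases heq.symm with ⟨hP, hpair, hQ⟩ | ⟨Q₀, hQ, hP⟩
      · exact hQ
      · have := hInv.lastNone P' (Q₀ ++ [(some r.input, 0)]) v (by rw [hP]; simp)
        simp at this
  | replNe P r hr hterm v A' =>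
    have hvne : v + ({A'} : Multiset g.NT) ≠ 0 := by simp
    have hBigs : ∀ X ∈ v + ({A'} : Multiset g.NT), Big g X :=
      (hInv.big (some r.input, v + {A'}) (by simp) hvne).2
    have hancF : ∀ B ∈ v + ({A'} : Multiset g.NT), ∀ X,
        (X ∈ stateVars g P ∨ X ∈ (v + {A'}).erase B) → Anc g X B :=
      hInv.anc_f P [] (some r.input) (v + {A'}) rfl
    have hsub : ∀ X, X ∈ stateVars g (P ++ [(some A', v)]) →
        X ∈ stateVars g (P ++ [(some r.input, v + {A'})]) := by
      intro X hX
      rcases mem_stateVars_concat.mp hX with hX | hX | hX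
      · exact mem_stateVars_concat.mpr (Or.inl hX)
      · simp only [Option.some.injEq] at hX
        exact mem_stateVars_concat.mpr (Or.inr (Or.inr (by rw [← hX]; simp)))
      · exact mem_stateVars_concat.mpr (Or.inr (Or.inr (Multiset.mem_add.mpr (Or.inl hX))))
    refine ⟨?_, ?_, ?_, ?_, ?_⟩
    · intro X hX Y hY hne
      exact hInv.clique X (hsub X hX) Y (hsub Y hY) hne
    · intro p hp hpv
      rcases List.mem_append.mp hp with hp | hp
      · exact hInv.big p (List.mem_append.mpr (Or.inl hp)) hpv
      · have hpeq : p = (some A', v) := List.mem_singleton.mp hp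
        rw [hpeq]
        refine ⟨?_, ?_⟩
        · rintro A hA
          simp only [Option.some.injEq] at hA
          exact hA ▸ hBigs A' (by simp)
        · exact fun X hX => hBigs X (Multiset.mem_add.mpr (Or.inl hX))
    · intro P' Q' c v' heq B hB X hX
      rcases split_concat_cases heq.symm with ⟨hP, hpair, hQ⟩ | ⟨Q₀, hQ, hP⟩
      · have hv' : v' = v := congrArg Prod.snd hpair
        rw [hv'] at hB hX
        rw [hP] at hX
        refine hancF B (Multiset.mem_add.mpr (Or.inl hB)) X ?_
        rcases hX with hX | hX
        · exact Or.inl hX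
        · exact Or.inr (Multiset.mem_of_le
            (Multiset.erase_le_erase B (Multiset.le_add_right v {A'})) hX)
      · exact hInv.anc_f P' (Q₀ ++ [(some r.input, v + {A'})]) c v'
          (by rw [hP]; simp) B hB X hX
    · intro P' A'' v' heq X hX
      obtain ⟨hP, hpair⟩ := concat_inj heq.symm
      have hA'' : A'' = A' := by
        have := congrArg Prod.fst hpair
        simpa using this
      have hv' : v' = v := congrArg Prod.snd hpair
      rw [hv'] at hX
      rw [hP] at hX
      rw [hA'']
      refine hancF A' (by simp) X ?_
      rw [erase_add_singleton]
      exact hX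
    · intro P' Q' v' heq
      rcases split_concat_cases heq.symm with ⟨hP, hpair, hQ⟩ | ⟨Q₀, hQ, hP⟩
      · exact hQ.symm ▸ hQ
      · have := hInv.lastNone P' (Q₀ ++ [(some r.input, v + {A'})]) v' (by rw [hP]; simp)
        simp at this
  | shorten P A v A' =>
    have hvne : v + ({A'} : Multiset g.NT) ≠ 0 := by simp
    have hBigs : ∀ X ∈ v + ({A'} : Multiset g.NT), Big g X :=
      (hInv.big (some A, v + {A'}) (by simp) hvne).2
    have hancF : ∀ B ∈ v + ({A'} : Multiset g.NT), ∀ X,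
        (X ∈ stateVars g P ∨ X ∈ (v + {A'}).erase B) → Anc g X B :=
      hInv.anc_f P [((none : Option g.NT), (0 : Multiset g.NT))] (some A) (v + {A'}) rfl
    have hsub : ∀ X, X ∈ stateVars g (P ++ [(some A', v)]) →
        X ∈ stateVars g (P ++ [(some A, v + {A'}), ((none : Option g.NT), (0 : Multiset g.NT))]) := by
      intro X hX
      have h2 : P ++ [(some A, v + {A'}), ((none : Option g.NT), (0 : Multiset g.NT))]
          = (P ++ [(some A, v + {A'})]) ++ [((none : Option g.NT), (0 : Multiset g.NT))] := by simp
      rw [h2, mem_stateVars_concat]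
      rcases mem_stateVars_concat.mp hX with hX | hX | hX
      · exact Or.inl (mem_stateVars_concat.mpr (Or.inl hX))
      · simp only [Option.some.injEq] at hX
        exact Or.inl (mem_stateVars_concat.mpr (Or.inr (Or.inr (by rw [← hX]; simp))))
      · exact Or.inl (mem_stateVars_concat.mpr
          (Or.inr (Or.inr (Multiset.mem_add.mpr (Or.inl hX)))))
    refine ⟨?_, ?_, ?_, ?_, ?_⟩
    · intro X hX Y hY hne
      exact hInv.clique X (hsub X hX) Y (hsub Y hY) hne
    · intro p hp hpv
      rcases List.mem_append.mp hp with hp | hp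
      · exact hInv.big p (List.mem_append.mpr (Or.inl hp)) hpv
      · have hpeq : p = (some A', v) := List.mem_singleton.mp hp
        rw [hpeq]
        refine ⟨?_, ?_⟩
        · rintro A'' hA
          simp only [Option.some.injEq] at hA
          exact hA ▸ hBigs A' (by simp)
        · exact fun X hX => hBigs X (Multiset.mem_add.mpr (Or.inl hX))
    · intro P' Q' c v' heq B hB X hX
      rcases split_concat_cases heq.symm with ⟨hP, hpair, hQ⟩ | ⟨Q₀, hQ, hP⟩
      · have hv' : v' = v := congrArg Prod.snd hpair
        rw [hv'] at hB hX
        rw [hP] at hX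
        refine hancF B (Multiset.mem_add.mpr (Or.inl hB)) X ?_
        rcases hX with hX | hX
        · exact Or.inl hX
        · exact Or.inr (Multiset.mem_of_le
            (Multiset.erase_le_erase B (Multiset.le_add_right v {A'})) hX)
      · exact hInv.anc_f P' (Q₀ ++ [(some A, v + {A'}), ((none : Option g.NT), (0 : Multiset g.NT))]) c v'
          (by rw [hP]; simp) B hB X hX
    · intro P' A'' v' heq X hX
      obtain ⟨hP, hpair⟩ := concat_inj heq.symm
      have hA'' : A'' = A' := by
        have := congrArg Prod.fst hpair
        simpa using this
      have hv' : v' = v := congrArg Prod.snd hpair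
      rw [hv'] at hX
      rw [hP] at hX
      rw [hA'']
      refine hancF A' (by simp) X ?_
      rw [erase_add_singleton]
      exact hX
    · intro P' Q' v' heq
      rcases split_concat_cases heq.symm with ⟨hP, hpair, hQ⟩ | ⟨Q₀, hQ, hP⟩
      · exact hQ
      · have := hInv.lastNone P'
          (Q₀ ++ [(some A, v + {A'}), ((none : Option g.NT), (0 : Multiset g.NT))]) v'
          (by rw [hP]; simp)
        simp at this

lemma inv_start : AutInv g (start g) := by
  constructor
  · intro X hX Y hY hne
    have hX' : X = g.initial := by
      rcases hX with ⟨p, hp, h⟩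
      have : p = (some g.initial, 0) := by simpa [start] using hp
      rw [this] at h
      rcases h with h | h
      · simpa [eq_comm] using h
      · exact absurd h (Multiset.notMem_zero X)
    have hY' : Y = g.initial := by
      rcases hY with ⟨p, hp, h⟩
      have : p = (some g.initial, 0) := by simpa [start] using hp
      rw [this] at h
      rcases h with h | h
      · simpa [eq_comm] using h
      · exact absurd h (Multiset.notMem_zero Y)
    exact absurd (hX'.trans hY'.symm) hne
  · intro p hp hv
    have : p = (some g.initial, 0) := by simpa [start] using hp
    rw [this] at hv
    simp at hv
  · intro P Q c v heq B hB X hX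
    cases P with
    | nil =>
      simp only [start, List.nil_append, List.cons.injEq] at heq
      have hv : v = 0 := (congrArg Prod.snd heq.1).symm
      rw [hv] at hB
      exact absurd hB (Multiset.notMem_zero B)
    | cons p P' =>
      simp only [start, List.cons_append, List.cons.injEq] at heq
      exact absurd heq.2.symm (by simp)
  · intro P A v heq X hX
    have heq' : ([] : RSeq g) ++ [((some g.initial : Option g.NT), (0 : Multiset g.NT))]
        = P ++ [(some A, v)] := by simpa [start] using heq
    obtain ⟨hP, hpair⟩ := concat_inj heq'
    have hv : v = 0 := (congrArg Prod.snd hpair).symm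
    exact absurd hX (by
      rw [← hP, hv]
      rintro (hX | hX)
      · simp [stateVars] at hX
      · exact absurd hX (Multiset.notMem_zero X))
  · intro P Q v heq
    cases P with
    | nil =>
      simp only [start, List.nil_append, List.cons.injEq] at heq
      exact absurd (congrArg Prod.fst heq.1) (by simp)
    | cons p P' =>
      simp only [start, List.cons_append, List.cons.injEq] at heq
      exact absurd heq.2.symm (by simp)

lemma steps_inv {RS₁ RS₂ : RSeq g} {w : List T} (h : Steps g RS₁ w RS₂)
    (hInv : AutInv g RS₁) : AutInv g RS₂ := by
  induction h with
  | refl _ => exact hInv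
  | tail h hstep h3 ih => exact step_preserves_inv hstep ih

lemma filterMap_id_count {α : Type*} [DecidableEq α] (l : List (Option α)) (a : α) :
    (l.filterMap id).count a = l.count (some a) := by
  induction l with
  | nil => rfl
  | cons o l ih =>
    cases o with
    | none => simpa [List.count_cons] using ih
    | some b =>
      by_cases hab : b = a
      · subst hab
        simpa [List.count_cons] using ih
      · simpa [List.count_cons, hab, Option.some_inj] using ih

lemma filterMap_id_length {α : Type*} (l : List (Option α)) (h : ∀ o ∈ l, o ≠ none) :
    (l.filterMap id).length = l.length := by
  induction l with
  | nil => rfl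
  | cons o l ih =>
    cases o with
    | none => exact absurd rfl (h none (by simp))
    | some b =>
      simp only [List.filterMap_cons, id]
      exact congrArg (· + 1) (ih (fun o ho => h o (by simp [ho])))

lemma length_le_of_ok {RS : RSeq g} (hsome : ∀ p ∈ RS, p.1 ≠ none) (hok : Ok g RS)
    {d : ℕ}
    (hbag : ∀ S : Set g.NT, S.Finite →
      (∀ X ∈ S, ∀ Y ∈ S, X ≠ Y → (reminderGraph g).Adj X Y) → S.ncard ≤ d)
    (hclique : ∀ X ∈ stateVars g RS, ∀ Y ∈ stateVars g RS, X ≠ Y →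
      (reminderGraph g).Adj X Y) :
    RS.length ≤ 2 * d := by
  classical
  have hcard : ∀ F : Finset g.NT, ↑F ⊆ stateVars g RS → F.card ≤ d := by
    intro F hF
    have hfin := stateVars_finite (g := g) RS
    have h1 : (↑F : Set g.NT).ncard ≤ (stateVars g RS).ncard :=
      Set.ncard_le_ncard hF hfin
    have h2 : (stateVars g RS).ncard ≤ d := hbag _ hfin hclique
    simpa [Set.ncard_coe_finset] using h1.trans h2
  set l : List (Option g.NT) := RS.map Prod.fst with hl
  have hlnone : ∀ o ∈ l, o ≠ none := by
    intro o ho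
    obtain ⟨p, hp, rfl⟩ := List.mem_map.mp ho
    exact hsome p hp
  set cur : List g.NT := l.filterMap id with hcur
  have hlen : cur.length = RS.length := by
    rw [hcur, filterMap_id_length l hlnone, hl, List.length_map]
  have hsum : ∑ A ∈ cur.toFinset, cur.count A = cur.length := by
    have h := Multiset.toFinset_sum_count_eq (ι := g.NT) (↑cur)
    simpa using h
  have hcnt : ∀ A ∈ cur.toFinset, cur.count A ≤ 2 := by
    intro A _
    rw [hcur, filterMap_id_count]
    exact hok A
  have hsub : ↑cur.toFinset ⊆ stateVars g RS := by
    intro A hA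
    have : A ∈ cur := List.mem_toFinset.mp (by simpa using hA)
    obtain ⟨o, ho, hoa⟩ := List.mem_filterMap.mp this
    obtain ⟨p, hp, rfl⟩ := List.mem_map.mp ho
    exact ⟨p, hp, Or.inl (by simpa [id] using hoa)⟩
  calc RS.length = cur.length := hlen.symm
    _ = ∑ A ∈ cur.toFinset, cur.count A := hsum.symm
    _ ≤ cur.toFinset.card * 2 := by
        calc ∑ A ∈ cur.toFinset, cur.count A ≤ cur.toFinset.card • 2 :=
          Finset.sum_le_card_nsmul _ _ 2 hcnt
        _ = cur.toFinset.card * 2 := by rw [smul_eq_mul]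
    _ ≤ d * 2 := Nat.mul_le_mul_right 2 (hcard _ hsub)
    _ = 2 * d := Nat.mul_comm d 2

lemma steps_len {d : ℕ}
    (hbag : ∀ S : Set g.NT, S.Finite →
      (∀ X ∈ S, ∀ Y ∈ S, X ≠ Y → (reminderGraph g).Adj X Y) → S.ncard ≤ d)
    {RS₁ RS₂ : RSeq g} {w : List T} (h : Steps g RS₁ w RS₂)
    (hInv : AutInv g RS₁) (hlen : RS₁.length ≤ 2 * d) : RS₂.length ≤ 2 * d := by
  induction h with
  | refl _ => exact hlen
  | tail h hstep h3 ih =>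
    have hInv₂ := steps_inv h hInv
    have hInv₃ := step_preserves_inv hstep hInv₂
    have ihlen := ih
    cases hstep with
    | ext P r hr Aj hAj => simpa using ihlen
    | extNe P r hr v hv Aj hAj =>
      refine length_le_of_ok ?_ h3 hbag hInv₃.clique
      intro p hp
      rcases List.mem_append.mp hp with hp | hp
      · exact hInv₂.noNoneP rfl (by simp) hp
      · rcases List.mem_cons.mp hp with hpeq | hp
        · rw [hpeq]; simp
        · have : p = (some Aj, (ruleVars r : Multiset g.NT).erase Aj) :=
            List.mem_singleton.mp hp
          rw [this]; simp
    | replE P r hr hterm => simpa using ihlen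
    | replNe P r hr hterm v A' => simpa using ihlen
    | shorten P A v A' =>
      have h1 : (P ++ [(some A, v + {A'}), ((none : Option g.NT), (0 : Multiset g.NT))]).length
          = P.length + 2 := by simp
      have h2 : (P ++ [(some A', v)]).length = P.length + 1 := by simp
      omega

end Auto

/-- For a grammar `G` of regularity width `d` (treewidth of the reminder graph plus
one), every reachable state of `A(G)` has length at most `2d` and its set of
occurring variables has size at most `d`. -/
theorem state_length_le {T : Type*} (g : ContextFreeGrammar T)
    [DecidableEq g.NT] (d : ℕ)
    (hd : treewidth (reminderGraph g) + 1 = (d : ℕ∞))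
    (RS : RSeq g) (hRS : ReachableState g RS) :
    RS.length ≤ 2 * d ∧ (stateVars g RS).Finite ∧ (stateVars g RS).ncard ≤ d := by
  classical
  obtain ⟨ι, Tr, Br, htd, hB⟩ := exists_decomp hd
  have hbag : ∀ S : Set g.NT, S.Finite →
      (∀ X ∈ S, ∀ Y ∈ S, X ≠ Y → (reminderGraph g).Adj X Y) → S.ncard ≤ d := by
    intro S hfin hcl
    obtain ⟨η, hη⟩ := clique_subset_bag htd hfin hcl
    exact le_trans (Set.ncard_le_ncard hη (hB η).1) (hB η).2
  obtain ⟨w, hsteps⟩ := hRS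
  have hinv : AutInv g RS := steps_inv hsteps inv_start
  have hfin := stateVars_finite (g := g) RS
  have hncard : (stateVars g RS).ncard ≤ d := hbag _ hfin hinv.clique
  have hd1 : 1 ≤ d := by
    rcases Nat.eq_zero_or_pos d with rfl | h
    · exfalso
      rw [Nat.cast_zero, add_eq_zero] at hd
      exact one_ne_zero hd.2
    · exact h
  have hlen : RS.length ≤ 2 * d :=
    steps_len hbag hsteps inv_start (by simp [start]; omega)
  exact ⟨hlen, hfin, hncard⟩
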